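/- The symplectic trace is superadditive: for any two 2N×2N real positive-definite matrices C and D, Str(C + D) ≥ Str(C) + Str(D), where Str(Γ) = inf{Tr(SΓSᵀ) : S symplectic}. -/

import Mathlib

open Matrix

/-- The standard symplectic form `Ω = ⊕_{k=1}^N ω`, `ω = [[0,1],[−1,0]]`, on `ℝ^{2N}`. -/
def Omega (N : ℕ) : Matrix (Fin (2*N)) (Fin (2*N)) ℝ :=
  Matrix.of fun i j =>
    if i.val % 2 = 0 ∧ j.val = i.val + 1 then 1
    else if j.val % 2 = 0 ∧ i.val = j.val + 1 then -1 else 0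

/-- Symplectic trace: `Str(Γ) = inf{Tr(SΓSᵀ) : SΩSᵀ = Ω}`. -/
noncomputable def Str {ι : Type*} [Fintype ι] (J Γ : Matrix ι ι ℝ) : ℝ :=
  sInf {x : ℝ | ∃ S : Matrix ι ι ℝ, S * J * Sᵀ = J ∧ x = (S * Γ * Sᵀ).trace}

lemma aux_bdd {ι : Type*} [Fintype ι] [DecidableEq ι] (J Γ : Matrix ι ι ℝ) (hΓ : Γ.PosSemidef) :
    ∀ x ∈ {x : ℝ | ∃ S : Matrix ι ι ℝ, S * J * Sᵀ = J ∧ x = (S * Γ * Sᵀ).trace}, 0 ≤ x := by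
  rintro x ⟨S, -, rfl⟩
  have : (S * Γ * Sᴴ).PosSemidef := hΓ.mul_mul_conjTranspose_same S
  rw [conjTranspose_eq_transpose_of_trivial] at this
  rw [trace]
  apply Finset.sum_nonneg
  intro i _
  simpa [Matrix.mulVec, dotProduct, Pi.single_apply, Finset.sum_ite_eq, diag] using
    this.dotProduct_mulVec_nonneg (Pi.single i 1)

/-- The symplectic trace is superadditive: for positive-definite
`C, D`, `Str(C + D) ≥ Str(C) + Str(D)`. -/
theorem str_superadditive (N : ℕ) (C D : Matrix (Fin (2*N)) (Fin (2*N)) ℝ)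
    (hC : C.PosDef) (hD : D.PosDef) :
    Str (Omega N) C + Str (Omega N) D ≤ Str (Omega N) (C + D) := by
  apply le_csInf
  · exact ⟨_, 1, by simp, rfl⟩
  rintro x ⟨S, hS, rfl⟩
  have h1 : Str (Omega N) C ≤ (S * C * Sᵀ).trace :=
    csInf_le ⟨0, aux_bdd _ _ hC.posSemidef⟩ ⟨S, hS, rfl⟩
  have h2 : Str (Omega N) D ≤ (S * D * Sᵀ).trace :=
    csInf_le ⟨0, aux_bdd _ _ hD.posSemidef⟩ ⟨S, hS, rfl⟩
  have : (S * (C + D) * Sᵀ).trace = (S * C * Sᵀ).trace + (S * D * Sᵀ).trace := by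
    rw [mul_add, add_mul, trace_add]
  linarith
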